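/- Let x = (x_{ij} : i ∈ [n], j ∈ [t]) be a real array whose entries are not all equal. Let x̄ = (1/(nt)) Σ_{i,j} x_{ij}, σ_x² = (1/(nt)) Σ_{i,j} (x_{ij} − x̄)² (so σ_x² > 0), Y_i(x) = (1/t) Σ_j x_{ij}, and M = max_{i∈[n]} Y_i(x) − x̄ (note M ≥ 0). Then the permutation p-value of the max test satisfies (1/(nt)!)·|{π ∈ Π : max_i Y_i(x^π) ≥ max_i Y_i(x)}| ≤ n · exp(−t M² / (2 σ_x² + (2/3)(max_{i,j} x_{ij} − x̄) M)). -/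

import Mathlib

open Real Filter

attribute [local instance] Classical.propDecidable

noncomputable section

/-- Stream mean `Y_i(x) = (1/t) Σ_j x_{ij}`. -/
def streamMean (n t : ℕ) (x : Fin n × Fin t → ℝ) (i : Fin n) : ℝ :=
  (∑ j, x (i, j)) / t

section Aux

lemma real_exp_tsum (y : ℝ) : Real.exp y = ∑' n : ℕ, y ^ n / n.factorial := by
  rw [Real.exp_eq_exp_ℝ, NormedSpace.exp_eq_tsum_div]

lemma quad_bound_neg {y : ℝ} (hy : y ≤ 0) : Real.exp y ≤ 1 + y + y ^ 2 / 2 := by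
  have key : AntitoneOn (fun y : ℝ => 1 + y + y ^ 2 / 2 - Real.exp y) (Set.Iic 0) := by
    apply antitoneOn_of_deriv_nonpos (convex_Iic 0)
    · fun_prop
    · fun_prop
    · intro z hz
      have hd : HasDerivAt (fun y : ℝ => 1 + y + y ^ 2 / 2 - Real.exp y)
          (1 + 2 * z / 2 - Real.exp z) z := by
        have h1 : HasDerivAt (fun y : ℝ => 1 + y) 1 z := (hasDerivAt_id z).const_add 1
        have h2 : HasDerivAt (fun y : ℝ => y ^ 2 / 2) (2 * z / 2) z := by
          simpa using (hasDerivAt_pow 2 z).div_const 2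
        exact ((h1.add h2).sub (Real.hasDerivAt_exp z))
      rw [hd.deriv]
      have := Real.add_one_le_exp z
      linarith
  have h0 : (0:ℝ) ∈ Set.Iic (0:ℝ) := Set.mem_Iic.2 le_rfl
  have := key (Set.mem_Iic.2 hy) h0 hy
  simp at this
  linarith

lemma fact_ge : ∀ n : ℕ, 2 * 3 ^ n ≤ Nat.factorial (n + 2)
  | 0 => by norm_num [Nat.factorial]
  | n + 1 => by
    have ih := fact_ge n
    have h3 : Nat.factorial (n + 3) = (n + 3) * Nat.factorial (n + 2) := rfl
    calc 2 * 3 ^ (n+1) = 3 * (2 * 3 ^ n) := by ring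
    _ ≤ 3 * Nat.factorial (n+2) := by omega
    _ ≤ (n + 3) * Nat.factorial (n+2) := by
        apply Nat.mul_le_mul_right; omega
    _ = Nat.factorial (n+3) := h3.symm

lemma quad_bound_pos {y : ℝ} (hy : 0 ≤ y) (hy3 : y < 3) :
    Real.exp y ≤ 1 + y + y ^ 2 / (2 * (1 - y / 3)) := by
  have hsum := Real.summable_pow_div_factorial y
  have hterm : ∀ n : ℕ, y ^ (n + 2) / (Nat.factorial (n + 2)) ≤ y ^ 2 / 2 * (y / 3) ^ n := by
    intro n
    rw [div_pow, div_mul_div_comm, ← pow_add]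
    rw [div_le_div_iff₀ (by positivity) (by positivity)]
    have h2 : (2 * 3 ^ n : ℝ) ≤ (Nat.factorial (n + 2) : ℝ) := by exact_mod_cast fact_ge n
    calc y ^ (n+2) * (2 * 3 ^ n) ≤ y ^ (n + 2) * (Nat.factorial (n+2)) :=
          mul_le_mul_of_nonneg_left h2 (by positivity)
    _ = y ^ (2 + n) * (Nat.factorial (n+2)) := by rw [add_comm]
  have htail : ∑' n : ℕ, y ^ (n + 2) / (Nat.factorial (n + 2)) ≤
      ∑' n : ℕ, y ^ 2 / 2 * (y / 3) ^ n :=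
    Summable.tsum_le_tsum hterm ((summable_nat_add_iff 2).2 hsum)
      ((summable_geometric_of_lt_one (by positivity) (by linarith)).mul_left _)
  have hgeo : ∑' n : ℕ, y ^ 2 / 2 * (y / 3) ^ n = y ^ 2 / 2 * (1 - y/3)⁻¹ := by
    rw [tsum_mul_left, tsum_geometric_of_lt_one (by positivity) (by linarith)]
  rw [real_exp_tsum, ← Summable.sum_add_tsum_nat_add 2 hsum]
  have h1 : ∑ i ∈ Finset.range 2, y ^ i / (Nat.factorial i) = 1 + y := by
    simp [Finset.sum_range_succ, Nat.factorial]
  rw [h1]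
  have hpos : (0:ℝ) < 1 - y / 3 := by linarith
  have heq : y ^ 2 / 2 * (1 - y/3)⁻¹ = y ^ 2 / (2 * (1 - y / 3)) := by
    field_simp
  rw [hgeo] at htail
  rw [heq] at htail
  linarith

lemma quad_bound {y m : ℝ} (hm0 : 0 ≤ m) (hm3 : m < 3) (hym : y ≤ m) :
    Real.exp y ≤ 1 + y + y ^ 2 / (2 * (1 - m / 3)) := by
  have hden : (0:ℝ) < 1 - m / 3 := by linarith
  rcases le_or_gt y 0 with h | h
  · have h1 := quad_bound_neg h
    have h2 : y ^ 2 / 2 ≤ y ^ 2 / (2 * (1 - m / 3)) := by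
      apply div_le_div_of_nonneg_left (sq_nonneg y) (by linarith) (by nlinarith)
    linarith
  · have h1 := quad_bound_pos h.le (lt_of_le_of_lt hym hm3)
    have h2 : y ^ 2 / (2 * (1 - y / 3)) ≤ y ^ 2 / (2 * (1 - m / 3)) := by
      apply div_le_div_of_nonneg_left (sq_nonneg y) (by linarith) (by linarith)
    linarith

lemma sum_exp_bound {ι : Type*} [Fintype ι] (u : ι → ℝ) (c lam : ℝ)
    (hc : 0 ≤ c) (hu : ∀ p, u p ≤ c) (hsum : ∑ p, u p = 0)
    (hl : 0 ≤ lam) (hlc : lam * c < 3) :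
    ∑ p, Real.exp (lam * u p) ≤
      (Fintype.card ι : ℝ) + lam ^ 2 * (∑ p, (u p) ^ 2) / (2 * (1 - lam * c / 3)) := by
  have hterm : ∀ p, Real.exp (lam * u p)
      ≤ 1 + lam * u p + (lam * u p) ^ 2 / (2 * (1 - lam * c / 3)) :=
    fun p => quad_bound (by positivity) hlc (mul_le_mul_of_nonneg_left (hu p) hl)
  calc ∑ p, Real.exp (lam * u p)
      ≤ ∑ p, (1 + lam * u p + (lam * u p) ^ 2 / (2 * (1 - lam * c / 3))) :=
        Finset.sum_le_sum fun p _ => hterm p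
  _ = (Fintype.card ι : ℝ) + lam * (∑ p, u p)
        + lam ^ 2 * (∑ p, (u p) ^ 2) / (2 * (1 - lam * c / 3)) := by
      rw [Finset.sum_add_distrib, Finset.sum_add_distrib, Finset.sum_const,
        Finset.card_univ, nsmul_eq_mul, mul_one, ← Finset.mul_sum, ← Finset.sum_div]
      congr 2
      rw [Finset.mul_sum]
      apply Finset.sum_congr rfl
      intro p _
      ring
  _ = _ := by rw [hsum]; ring

variable {α : Type*} [Fintype α] [DecidableEq α]

/-- elementary symmetric sum -/
def esum (a : α → ℝ) (m : ℕ) (s : Finset α) : ℝ :=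
  ∑ T ∈ Finset.powersetCard m s, ∏ k ∈ T, a k

/-- sum over m-subsets containing k -/
def gsum (a : α → ℝ) (m : ℕ) (k : α) : ℝ :=
  ∑ S ∈ (Finset.powersetCard m (Finset.univ : Finset α)).filter (fun S => k ∈ S),
    ∏ q ∈ S, a q

lemma esum_nonneg {a : α → ℝ} (ha : ∀ k, 0 ≤ a k) (m : ℕ) (s : Finset α) :
    0 ≤ esum a m s :=
  Finset.sum_nonneg fun T _ => Finset.prod_nonneg fun k _ => ha k

lemma esum_zero (a : α → ℝ) (s : Finset α) : esum a 0 s = 1 := by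
  simp [esum]

lemma esum_split (a : α → ℝ) (m : ℕ) {s : Finset α} {l : α} (hl : l ∈ s) :
    esum a (m + 1) s = esum a (m + 1) (s.erase l) + a l * esum a m (s.erase l) := by
  unfold esum
  conv_lhs => rw [← Finset.insert_erase hl]
  rw [Finset.powersetCard_succ_insert (Finset.notMem_erase l s)]
  rw [Finset.sum_union]
  · congr 1
    rw [Finset.sum_image, Finset.mul_sum]
    · apply Finset.sum_congr rfl
      intro T hT
      rw [Finset.mem_powersetCard] at hT
      have hlT : l ∉ T := fun h => Finset.notMem_erase l s (hT.1 h)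
      rw [Finset.prod_insert hlT]
    · intro T hT T' hT' h
      rw [Finset.mem_coe, Finset.mem_powersetCard] at hT hT'
      have h1 : l ∉ T := fun h => Finset.notMem_erase l s (hT.1 h)
      have h2 : l ∉ T' := fun h => Finset.notMem_erase l s (hT'.1 h)
      rw [← Finset.erase_insert h1, ← Finset.erase_insert h2, h]
  · rw [Finset.disjoint_left]
    intro T hT hT'
    rw [Finset.mem_powersetCard] at hT
    obtain ⟨T', hT', rfl⟩ := Finset.mem_image.1 hT'
    exact Finset.notMem_erase l s (hT.1 (Finset.mem_insert_self l T'))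

lemma gsum_eq (a : α → ℝ) (m : ℕ) (k : α) :
    gsum a m k = esum a m (Finset.univ : Finset α) - esum a m (Finset.univ.erase k) := by
  have hsplit := Finset.sum_filter_add_sum_filter_not
    (Finset.powersetCard m (Finset.univ : Finset α)) (fun S => k ∈ S)
    (fun S => ∏ q ∈ S, a q)
  have hfil : (Finset.powersetCard m (Finset.univ : Finset α)).filter (fun S => k ∉ S)
      = Finset.powersetCard m (Finset.univ.erase k) := by
    ext S
    simp only [Finset.mem_filter, Finset.mem_powersetCard, Finset.subset_erase]
    tauto
  unfold gsum esum
  rw [← hsplit, hfil]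
  ring

lemma gsum_succ (a : α → ℝ) (m : ℕ) (k : α) :
    gsum a (m + 1) k = a k * esum a m (Finset.univ.erase k) := by
  have h := esum_split a m (Finset.mem_univ k)
  rw [gsum_eq, h]; ring

lemma sum_gsum (a : α → ℝ) (m : ℕ) :
    ∑ k, gsum a m k = m * esum a m (Finset.univ : Finset α) := by
  unfold gsum
  simp_rw [Finset.sum_filter]
  rw [Finset.sum_comm]
  unfold esum
  rw [Finset.mul_sum]
  apply Finset.sum_congr rfl
  intro S hS
  rw [Finset.mem_powersetCard] at hS
  rw [Finset.sum_ite_mem, Finset.univ_inter, Finset.sum_const, hS.2]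
  simp [mul_comm]

lemma monovary_gsum {a : α → ℝ} (ha : ∀ k, 0 ≤ a k) (m : ℕ) :
    Monovary a (gsum a m) := by
  match m with
  | 0 =>
    intro i j h
    exfalso
    rw [gsum_eq, gsum_eq] at h
    simp [esum_zero] at h
  | m + 1 =>
    intro i j h
    by_contra hc
    push_neg at hc
    have hij : i ≠ j := by rintro rfl; exact lt_irrefl _ h
    rw [gsum_succ, gsum_succ] at h
    have hji : j ∈ Finset.univ.erase i := Finset.mem_erase.2 ⟨hij.symm, Finset.mem_univ j⟩
    have hij' : i ∈ Finset.univ.erase j := Finset.mem_erase.2 ⟨hij, Finset.mem_univ i⟩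
    match m with
    | 0 =>
      rw [esum_zero, esum_zero] at h
      simp at h
      exact absurd h (not_lt.2 hc.le)
    | m + 1 =>
      rw [esum_split a m hji, esum_split a m hij'] at h
      rw [Finset.erase_right_comm] at h
      set E := esum a (m + 1) ((Finset.univ.erase j).erase i) with hE
      set F := esum a m ((Finset.univ.erase j).erase i) with hF
      have hE0 : 0 ≤ E := esum_nonneg ha _ _
      have hF0 : 0 ≤ F := esum_nonneg ha _ _
      nlinarith [h, hc, ha i, ha j, mul_nonneg (sub_nonneg.2 hc.le) hE0]

lemma maclaurin {a : α → ℝ} (ha : ∀ k, 0 ≤ a k) (hN : 0 < Fintype.card α) :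
    ∀ r : ℕ, esum a r (Finset.univ : Finset α)
      ≤ (Fintype.card α).choose r * ((∑ k, a k) / (Fintype.card α)) ^ r := by
  intro r
  induction r with
  | zero => simp [esum_zero]
  | succ r ih =>
    set N := Fintype.card α with hNdef
    rcases le_or_gt (r + 1) N with hle | hlt
    · have hr : r < N := hle
      have hNR : (0:ℝ) < N := by exact_mod_cast hN
      have hs0 : 0 ≤ ∑ k, a k := Finset.sum_nonneg fun k _ => ha k
      have he0 : 0 ≤ esum a r Finset.univ := esum_nonneg ha _ _
      -- key identity
      have key : ((r:ℝ) + 1) * esum a (r + 1) Finset.univ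
          = (∑ k, a k) * esum a r Finset.univ - ∑ k, a k * gsum a r k := by
        have h1 : ∑ k, gsum a (r + 1) k = ((r:ℝ) + 1) * esum a (r + 1) Finset.univ := by
          rw [sum_gsum]; push_cast; ring
        rw [← h1]
        have h2 : ∀ k ∈ Finset.univ, gsum a (r+1) k
            = a k * (esum a r Finset.univ - gsum a r k) := by
          intro k _
          rw [gsum_succ]
          have := gsum_eq a r k
          have h3 : esum a r (Finset.univ.erase k) = esum a r Finset.univ - gsum a r k := by
            linarith
          rw [h3]
        rw [Finset.sum_congr rfl h2]
        simp_rw [mul_sub]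
        rw [Finset.sum_sub_distrib, ← Finset.sum_mul]
      -- Chebyshev
      have cheb : (∑ k, a k) * (∑ k, gsum a r k) ≤ (N:ℝ) * ∑ k, a k * gsum a r k := by
        have := (monovary_gsum ha r).sum_mul_sum_le_card_mul_sum
        simpa using this
      rw [sum_gsum] at cheb
      -- combine
      have step : ((r:ℝ) + 1) * esum a (r + 1) Finset.univ
          ≤ (∑ k, a k) * esum a r Finset.univ * (((N:ℝ) - r) / N) := by
        have h4 : ∑ k, a k * gsum a r k
            ≥ (∑ k, a k) * ((r:ℝ) * esum a r Finset.univ) / N := by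
          rw [ge_iff_le, div_le_iff₀ hNR]
          linarith [cheb]
        rw [key]
        have expand : (∑ k, a k) * esum a r Finset.univ * (((N:ℝ) - r) / N)
            = (∑ k, a k) * esum a r Finset.univ
              - (∑ k, a k) * ((r:ℝ) * esum a r Finset.univ) / N := by
          field_simp
        rw [expand]
        linarith [h4]
      have ihs : (∑ k, a k) * esum a r Finset.univ * (((N:ℝ) - r) / N)
          ≤ (∑ k, a k) * (N.choose r * ((∑ k, a k) / N) ^ r) * (((N:ℝ) - r) / N) := by
        apply mul_le_mul_of_nonneg_right _ (by
          apply div_nonneg _ hNR.le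
          have : (r:ℝ) ≤ N := by exact_mod_cast hr.le
          linarith)
        exact mul_le_mul_of_nonneg_left ih hs0
      have hchoose : ((N.choose (r+1) : ℝ)) * ((r:ℝ) + 1) = (N.choose r : ℝ) * ((N:ℝ) - r) := by
        have := Nat.choose_succ_right_eq N r
        have hcast : ((N.choose (r+1) * (r+1) : ℕ) : ℝ) = ((N.choose r * (N - r) : ℕ) : ℝ) := by
          exact_mod_cast congrArg (Nat.cast (R := ℝ)) this
        push_cast [Nat.cast_sub hr.le] at hcast
        linarith [hcast]
      -- final algebra
      have hr1 : (0:ℝ) < (r:ℝ) + 1 := by positivity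
      rw [← mul_le_mul_iff_right₀ hr1]
      calc ((r:ℝ) + 1) * esum a (r+1) Finset.univ
          ≤ (∑ k, a k) * (N.choose r * ((∑ k, a k) / N) ^ r) * (((N:ℝ) - r) / N) :=
            le_trans step ihs
        _ = ((r:ℝ) + 1) * ((N.choose (r+1) : ℝ) * ((∑ k, a k) / N) ^ (r+1)) := by
            rw [pow_succ]
            linear_combination
              (-((((∑ k, a k) / (N:ℝ)) ^ r) * ((∑ k, a k) / (N:ℝ)))) * hchoose
    · have hempty : Finset.powersetCard (r+1) (Finset.univ : Finset α) = ∅ := by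
        apply Finset.powersetCard_eq_empty.2
        rw [Finset.card_univ]; exact hlt
      have : esum a (r+1) Finset.univ = 0 := by rw [esum, hempty]; simp
      rw [this, Nat.choose_eq_zero_of_lt hlt]
      simp

variable {α : Type*} [Fintype α] [DecidableEq α]

lemma exists_perm_image (S S' : Finset α) (h : S.card = S'.card) :
    ∃ τ : Equiv.Perm α, S.image τ = S' := by
  have hcard : Fintype.card {x // x ∈ S} = Fintype.card {x // x ∈ S'} := by
    simp [Fintype.card_coe, h]
  have e : {x // x ∈ S} ≃ {x // x ∈ S'} := Fintype.equivOfCardEq hcard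
  refine ⟨e.extendSubtype, ?_⟩
  apply Finset.eq_of_subset_of_card_le
  · intro y hy
    obtain ⟨z, hz, rfl⟩ := Finset.mem_image.1 hy
    exact e.extendSubtype_mem z hz
  · rw [Finset.card_image_of_injective _ (Equiv.injective _), h]

lemma fiber_card_const (R S S' : Finset α) (h : S.card = S'.card) :
    (Finset.univ.filter (fun σ : Equiv.Perm α => R.image σ = S)).card
      = (Finset.univ.filter (fun σ : Equiv.Perm α => R.image σ = S')).card := by
  obtain ⟨τ, hτ⟩ := exists_perm_image S S' h
  apply Finset.card_bij' (fun σ _ => σ.trans τ) (fun σ _ => σ.trans τ.symm)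
  · intro σ _
    apply Equiv.ext; intro p; simp
  · intro σ _
    apply Equiv.ext; intro p; simp
  · intro σ hσ
    rw [Finset.mem_filter] at hσ ⊢
    refine ⟨Finset.mem_univ _, ?_⟩
    have h5 : R.image (σ.trans τ) = (R.image σ).image τ := by
      rw [Finset.image_image]; rfl
    rw [h5, hσ.2, hτ]
  · intro σ hσ
    rw [Finset.mem_filter] at hσ ⊢
    refine ⟨Finset.mem_univ _, ?_⟩
    have h5 : R.image (σ.trans τ.symm) = (R.image σ).image τ.symm := by
      rw [Finset.image_image]; rfl
    rw [h5, hσ.2, ← hτ, Finset.image_image]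
    simp

lemma perm_sum_eq (b : α → ℝ) (R : Finset α) :
    ((Fintype.card α).choose R.card : ℝ) * ∑ σ : Equiv.Perm α, ∏ p ∈ R, b (σ p)
      = ((Fintype.card α).factorial : ℝ) *
          ∑ S ∈ Finset.powersetCard R.card Finset.univ, ∏ q ∈ S, b q := by
  classical
  set r := R.card with hr
  set c := (Finset.univ.filter (fun σ : Equiv.Perm α => R.image σ = R)).card with hc
  have hmaps : ∀ σ : Equiv.Perm α, σ ∈ (Finset.univ : Finset (Equiv.Perm α)) →
      R.image σ ∈ Finset.powersetCard r Finset.univ := by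
    intro σ _
    rw [Finset.mem_powersetCard]
    exact ⟨Finset.subset_univ _, by rw [Finset.card_image_of_injective _ (Equiv.injective σ)]⟩
  -- fiberwise sum
  have h1 : ∑ σ : Equiv.Perm α, ∏ p ∈ R, b (σ p)
      = ∑ S ∈ Finset.powersetCard r Finset.univ,
          ∑ σ ∈ Finset.univ.filter (fun σ : Equiv.Perm α => R.image σ = S),
            ∏ p ∈ R, b (σ p) :=
    (Finset.sum_fiberwise_of_maps_to hmaps _).symm
  have h2 : ∀ S ∈ Finset.powersetCard r Finset.univ,
      ∑ σ ∈ Finset.univ.filter (fun σ : Equiv.Perm α => R.image σ = S),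
        ∏ p ∈ R, b (σ p) = (c : ℝ) * ∏ q ∈ S, b q := by
    intro S hS
    have hcard : (Finset.univ.filter (fun σ : Equiv.Perm α => R.image σ = S)).card = c := by
      rw [hc]
      apply fiber_card_const
      rw [Finset.mem_powersetCard] at hS
      rw [hS.2]
    rw [Finset.sum_congr rfl (fun σ hσ => ?_), Finset.sum_const, hcard, nsmul_eq_mul]
    rw [Finset.mem_filter] at hσ
    rw [← hσ.2, Finset.prod_image]
    intro p _ q _ hpq
    exact Equiv.injective σ hpq
  have h3 : ((Fintype.card α).factorial : ℕ) = c * (Fintype.card α).choose r := by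
    have := Finset.card_eq_sum_card_fiberwise hmaps
    rw [Finset.card_univ, Fintype.card_perm] at this
    rw [this]
    have : ∀ S ∈ Finset.powersetCard r (Finset.univ : Finset α),
        (Finset.univ.filter (fun σ : Equiv.Perm α => R.image σ = S)).card = c := by
      intro S hS
      rw [hc]
      apply fiber_card_const
      rw [Finset.mem_powersetCard] at hS
      rw [hS.2]
    rw [Finset.sum_congr rfl this, Finset.sum_const, Finset.card_powersetCard,
      Finset.card_univ, smul_eq_mul, mul_comm]
  rw [h1, Finset.sum_congr rfl h2, ← Finset.mul_sum]
  rw [h3]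
  push_cast
  ring

end Aux

/-- deterministic bound on the permutation p-value of the max test.
For a real array `x` whose entries are not all equal, with `M = max_i Y_i(x) − x̄`,
the permutation p-value is at most
`n · exp(−t M²/(2 σ_x² + (2/3)(max_{ij} x_{ij} − x̄) M))`. -/
theorem statement16 (n t : ℕ) (x : Fin n × Fin t → ℝ)
    (hne : ∃ p q : Fin n × Fin t, x p ≠ x q) :
    let xbar : ℝ := (∑ p, x p) / (n * t)
    let sig2 : ℝ := (∑ p, (x p - xbar) ^ 2) / (n * t)
    let M : ℝ := (⨆ i, streamMean n t x i) - xbar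
    ((Finset.univ.filter fun σ : Equiv.Perm (Fin n × Fin t) =>
        (⨆ i, streamMean n t (fun p => x (σ p)) i) ≥ ⨆ i, streamMean n t x i).card : ℝ)
        / (n * t).factorial
      ≤ n * Real.exp (-(t * M ^ 2) /
          (2 * sig2 + 2 / 3 * ((⨆ p, x p) - xbar) * M)) := by
  intro xbar sig2 M
  classical
  obtain ⟨p0, q0, hpq⟩ := hne
  have hn : 0 < n := p0.1.pos
  have ht : 0 < t := p0.2.pos
  have hnR : (0:ℝ) < n := by exact_mod_cast hn
  have htR : (0:ℝ) < t := by exact_mod_cast ht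
  have hNR : (0:ℝ) < (n:ℝ) * t := by positivity
  have hcard : Fintype.card (Fin n × Fin t) = n * t := by simp
  have hxbar : xbar = (∑ p, x p) / ((n:ℝ) * t) := rfl
  have hsig2 : sig2 = (∑ p, (x p - xbar) ^ 2) / ((n:ℝ) * t) := rfl
  have hMdef : M = (⨆ i, streamMean n t x i) - xbar := rfl
  clear_value xbar sig2 M
  have hsum_x : ∑ p : Fin n × Fin t, x p = (n:ℝ) * t * xbar := by
    rw [hxbar]; field_simp
  have hsum_sq : ∑ p : Fin n × Fin t, (x p - xbar) ^ 2 = (n:ℝ) * t * sig2 := by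
    rw [hsig2]; field_simp
  set u : Fin n × Fin t → ℝ := fun p => x p - xbar with hu
  have hsum_u : ∑ p, u p = 0 := by
    rw [hu]
    rw [Finset.sum_sub_distrib, Finset.sum_const, Finset.card_univ, hcard, nsmul_eq_mul,
      hsum_x]
    push_cast; ring
  -- csup
  set csup := (⨆ p, x p) - xbar with hcsup
  clear_value csup
  have hbdd : BddAbove (Set.range x) := (Set.finite_range x).bddAbove
  have hxle : ∀ p, x p ≤ ⨆ p, x p := fun p => le_ciSup hbdd p
  have hule : ∀ p, u p ≤ csup := fun p => by
    rw [hu, hcsup]; simp only []; linarith [hxle p]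
  have hc_pos : 0 < csup := by
    rw [hcsup, sub_pos]
    by_contra hle
    push_neg at hle
    have hall : ∀ p, x p ≤ xbar := fun p => (hxle p).trans hle
    have hzero : ∑ p : Fin n × Fin t, (xbar - x p) = 0 := by
      rw [Finset.sum_sub_distrib, Finset.sum_const, Finset.card_univ, hcard, nsmul_eq_mul,
        hsum_x]
      push_cast; ring
    have hall0 := (Finset.sum_eq_zero_iff_of_nonneg
      (fun p _ => sub_nonneg.2 (hall p))).1 hzero
    have e1 := hall0 p0 (Finset.mem_univ _)
    have e2 := hall0 q0 (Finset.mem_univ _)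
    exact hpq (by linarith [sub_eq_zero.1 e1, sub_eq_zero.1 e2])
  -- sig2 > 0
  have hsig_pos : 0 < sig2 := by
    have hne' : x p0 ≠ xbar ∨ x q0 ≠ xbar := by
      by_contra hcon; push_neg at hcon; exact hpq (hcon.1.trans hcon.2.symm)
    have hpos : 0 < ∑ p : Fin n × Fin t, (x p - xbar) ^ 2 := by
      rcases hne' with h | h
      · refine Finset.sum_pos' (fun p _ => sq_nonneg _) ⟨p0, Finset.mem_univ _, ?_⟩
        have := sub_ne_zero.2 h; positivity
      · refine Finset.sum_pos' (fun p _ => sq_nonneg _) ⟨q0, Finset.mem_univ _, ?_⟩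
        have := sub_ne_zero.2 h; positivity
    rw [hsig2]
    exact div_pos hpos hNR
  -- M ≥ 0
  haveI : Nonempty (Fin n) := ⟨⟨0, hn⟩⟩
  have hYbdd : BddAbove (Set.range (streamMean n t x)) := (Set.finite_range _).bddAbove
  have hsupY : (⨆ i, streamMean n t x i) = xbar + M := by rw [hMdef]; ring
  have hM0 : 0 ≤ M := by
    have hsumY : ∑ i, streamMean n t x i = (n:ℝ) * xbar := by
      unfold streamMean
      rw [← Finset.sum_div, ← Fintype.sum_prod_type, hsum_x]
      field_simp
    have hle2 : (n:ℝ) * xbar ≤ (n:ℝ) * (xbar + M) := by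
      rw [← hsumY, ← hsupY]
      calc ∑ i, streamMean n t x i
          ≤ ∑ _i : Fin n, (⨆ i, streamMean n t x i) :=
            Finset.sum_le_sum (fun i _ => le_ciSup hYbdd i)
      _ = (n:ℝ) * (⨆ i, streamMean n t x i) := by
          rw [Finset.sum_const, Finset.card_univ, nsmul_eq_mul]; simp
    nlinarith
  -- lambda
  set D := sig2 + csup * M / 3 with hD
  have hD_pos : 0 < D := by rw [hD]; nlinarith [mul_nonneg hc_pos.le hM0]
  set lam := M / D with hlam
  have hlam0 : 0 ≤ lam := div_nonneg hM0 hD_pos.le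
  have hlc : lam * csup < 3 := by
    rw [hlam, div_mul_eq_mul_div, div_lt_iff₀ hD_pos, hD]
    nlinarith [mul_nonneg hM0 hc_pos.le]
  have hden_pos : (0:ℝ) < 1 - lam * csup / 3 := by linarith
  -- b and mean bound
  set b : Fin n × Fin t → ℝ := fun p => Real.exp (lam * u p) with hb
  set z := lam ^ 2 * sig2 / (2 * (1 - lam * csup / 3)) with hz
  have hmean_b : (∑ p, b p) / ((n:ℝ) * t) ≤ Real.exp z := by
    have h1 := sum_exp_bound u csup lam hc_pos.le hule hsum_u hlam0 hlc
    rw [hcard] at h1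
    have h2 : ∑ p, (u p) ^ 2 = (n:ℝ) * t * sig2 := hsum_sq
    rw [h2] at h1
    have h3 : (∑ p, b p) / ((n:ℝ) * t) ≤ 1 + z := by
      rw [div_le_iff₀ hNR, hz]
      calc ∑ p, b p ≤ ((n*t : ℕ):ℝ) + lam ^ 2 * ((n:ℝ)*t*sig2) / (2*(1 - lam*csup/3)) := h1
      _ = (1 + lam ^ 2 * sig2 / (2 * (1 - lam * csup / 3))) * ((n:ℝ)*t) := by
          push_cast; field_simp
    calc (∑ p, b p) / ((n:ℝ) * t) ≤ 1 + z := h3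
    _ ≤ Real.exp z := by linarith [Real.add_one_le_exp z]
  have hb_nonneg : ∀ p, 0 ≤ b p := fun p => (Real.exp_pos _).le
  -- per-row permutation sum bound
  have hperm : ∀ i : Fin n, ∑ σ : Equiv.Perm (Fin n × Fin t), ∏ j, b (σ (i, j))
      ≤ ((n*t).factorial : ℝ) * Real.exp ((t:ℝ) * z) := by
    intro i
    set R : Finset (Fin n × Fin t) := Finset.univ.image (fun j => (i, j)) with hR
    have hRcard : R.card = t := by
      rw [hR, Finset.card_image_of_injective _ (fun a b hab => by simpa using hab)]
      simp
    have hprod : ∀ σ : Equiv.Perm (Fin n × Fin t),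
        ∏ p ∈ R, b (σ p) = ∏ j, b (σ (i, j)) := by
      intro σ
      rw [hR, Finset.prod_image (fun a _ b' _ hab => by simpa using hab)]
    have h1 := perm_sum_eq b R
    rw [hRcard, hcard] at h1
    have h2 := maclaurin (a := b) hb_nonneg (by rw [hcard]; positivity) t
    rw [hcard] at h2
    have hesum : esum b t (Finset.univ : Finset (Fin n × Fin t))
        = ∑ S ∈ Finset.powersetCard t (Finset.univ : Finset (Fin n × Fin t)),
            ∏ q ∈ S, b q := rfl
    have hchoose_pos : (0:ℝ) < ((n*t).choose t : ℝ) := by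
      have : t ≤ n * t := Nat.le_mul_of_pos_left t hn
      exact_mod_cast Nat.choose_pos this
    rw [← mul_le_mul_iff_right₀ hchoose_pos]
    have hσsum : ∑ σ : Equiv.Perm (Fin n × Fin t), ∏ j, b (σ (i, j))
        = ∑ σ : Equiv.Perm (Fin n × Fin t), ∏ p ∈ R, b (σ p) := by
      exact Finset.sum_congr rfl (fun σ _ => (hprod σ).symm)
    rw [hσsum, h1]
    have hmb : ((∑ p, b p) / ((n:ℝ)*t)) ^ t ≤ Real.exp ((t:ℝ) * z) := by
      rw [Real.exp_nat_mul]
      exact pow_le_pow_left₀ (div_nonneg (Finset.sum_nonneg fun p _ => hb_nonneg p) hNR.le)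
        hmean_b t
    calc ((n*t).factorial : ℝ) * ∑ S ∈ Finset.powersetCard t Finset.univ, ∏ q ∈ S, b q
        ≤ ((n*t).factorial : ℝ) * (((n*t).choose t : ℝ) * ((∑ p, b p) / ((n:ℝ)*t)) ^ t) := by
          apply mul_le_mul_of_nonneg_left _ (by positivity)
          rw [← hesum]
          calc esum b t Finset.univ
              ≤ ((n*t).choose t : ℝ) * ((∑ p, b p) / ((n*t : ℕ):ℝ)) ^ t := h2
          _ = ((n*t).choose t : ℝ) * ((∑ p, b p) / ((n:ℝ)*t)) ^ t := by push_cast; ring_nf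
      _ ≤ ((n*t).factorial : ℝ) * (((n*t).choose t : ℝ) * Real.exp ((t:ℝ)*z)) := by
          apply mul_le_mul_of_nonneg_left _ (by positivity)
          exact mul_le_mul_of_nonneg_left hmb hchoose_pos.le
      _ = ((n*t).choose t : ℝ) * (((n*t).factorial : ℝ) * Real.exp ((t:ℝ)*z)) := by ring
  -- per-row tail bound
  have hcardFi : ∀ i : Fin n,
      ((Finset.univ.filter (fun σ : Equiv.Perm (Fin n × Fin t) =>
          (xbar + M) * t ≤ ∑ j, x (σ (i, j)))).card : ℝ)
        ≤ Real.exp (-(lam * ((t:ℝ) * M))) * ∑ σ : Equiv.Perm (Fin n × Fin t), ∏ j, b (σ (i, j)) := by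
    intro i
    have hkey : ∀ σ ∈ Finset.univ.filter (fun σ : Equiv.Perm (Fin n × Fin t) =>
        (xbar + M) * t ≤ ∑ j, x (σ (i, j))),
        (1:ℝ) ≤ Real.exp (-(lam * ((t:ℝ) * M))) * ∏ j, b (σ (i, j)) := by
      intro σ hσ
      rw [Finset.mem_filter] at hσ
      have hsx : (xbar + M) * t ≤ ∑ j, x (σ (i, j)) := hσ.2
      have husum : ∑ j, u (σ (i, j)) = (∑ j, x (σ (i, j))) - (t:ℝ) * xbar := by
        rw [hu]
        rw [Finset.sum_sub_distrib, Finset.sum_const, Finset.card_univ, Fintype.card_fin,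
          nsmul_eq_mul]
      have hprodb : ∏ j, b (σ (i, j)) = Real.exp (lam * ∑ j, u (σ (i, j))) := by
        rw [Finset.mul_sum, Real.exp_sum]
      rw [hprodb, ← Real.exp_add]
      apply Real.one_le_exp
      have h6 : (t:ℝ) * M ≤ ∑ j, u (σ (i, j)) := by
        rw [husum]; linarith only [hsx]
      linarith only [mul_le_mul_of_nonneg_left h6 hlam0]
    calc ((Finset.univ.filter (fun σ : Equiv.Perm (Fin n × Fin t) =>
        (xbar + M) * t ≤ ∑ j, x (σ (i, j)))).card : ℝ)
        = ∑ _σ ∈ Finset.univ.filter (fun σ : Equiv.Perm (Fin n × Fin t) =>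
            (xbar + M) * t ≤ ∑ j, x (σ (i, j))), (1:ℝ) := by
          rw [Finset.sum_const, nsmul_eq_mul, mul_one]
      _ ≤ ∑ σ ∈ Finset.univ.filter (fun σ : Equiv.Perm (Fin n × Fin t) =>
            (xbar + M) * t ≤ ∑ j, x (σ (i, j))),
            Real.exp (-(lam * ((t:ℝ) * M))) * ∏ j, b (σ (i, j)) :=
          Finset.sum_le_sum hkey
      _ ≤ ∑ σ : Equiv.Perm (Fin n × Fin t), Real.exp (-(lam * ((t:ℝ) * M))) * ∏ j, b (σ (i, j)) := by
          apply Finset.sum_le_sum_of_subset_of_nonneg (Finset.filter_subset _ _)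
          intro σ _ _
          apply mul_nonneg (Real.exp_pos _).le
          exact Finset.prod_nonneg fun j _ => hb_nonneg _
      _ = Real.exp (-(lam * ((t:ℝ) * M))) * ∑ σ : Equiv.Perm (Fin n × Fin t), ∏ j, b (σ (i, j)) := by
          rw [Finset.mul_sum]
  -- union bound
  have hsub : (Finset.univ.filter fun σ : Equiv.Perm (Fin n × Fin t) =>
      (⨆ i, streamMean n t (fun p => x (σ p)) i) ≥ ⨆ i, streamMean n t x i)
      ⊆ Finset.univ.biUnion (fun i : Fin n => Finset.univ.filter
          (fun σ : Equiv.Perm (Fin n × Fin t) => (xbar + M) * t ≤ ∑ j, x (σ (i, j)))) := by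
    intro σ hσ
    rw [Finset.mem_filter] at hσ
    obtain ⟨i, hi⟩ := Finite.exists_max (fun i => streamMean n t (fun p => x (σ p)) i)
    have h2 : xbar + M ≤ streamMean n t (fun p => x (σ p)) i := by
      rw [← hsupY]
      exact le_trans hσ.2 (ciSup_le hi)
    rw [Finset.mem_biUnion]
    refine ⟨i, Finset.mem_univ _, Finset.mem_filter.2 ⟨Finset.mem_univ _, ?_⟩⟩
    have h3 : streamMean n t (fun p => x (σ p)) i = (∑ j, x (σ (i, j))) / t := rfl
    rw [h3, le_div_iff₀ htR] at h2
    exact h2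
  -- final exponent identity
  have hden_eq : 1 - lam * csup / 3 = sig2 / D := by
    rw [hlam]
    field_simp
    rw [hD]; ring
  have hexp_eq : Real.exp (-(lam * ((t:ℝ) * M))) * Real.exp ((t:ℝ) * z)
      = Real.exp (-((t:ℝ) * M ^ 2) / (2 * sig2 + 2 / 3 * csup * M)) := by
    rw [← Real.exp_add]
    congr 1
    have h2D : 2 * sig2 + 2 / 3 * csup * M = 2 * D := by rw [hD]; ring
    rw [h2D, hz, hden_eq, hlam]
    field_simp
    ring
  -- assembly
  have hfactR : (0:ℝ) < ((n*t).factorial : ℝ) := by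
    exact_mod_cast Nat.factorial_pos _
  rw [div_le_iff₀ hfactR]
  have hchain : ((Finset.univ.filter fun σ : Equiv.Perm (Fin n × Fin t) =>
      (⨆ i, streamMean n t (fun p => x (σ p)) i) ≥ ⨆ i, streamMean n t x i).card : ℝ)
      ≤ ∑ i : Fin n, ((Finset.univ.filter (fun σ : Equiv.Perm (Fin n × Fin t) =>
          (xbar + M) * t ≤ ∑ j, x (σ (i, j)))).card : ℝ) := by
    have h1 := Finset.card_le_card hsub
    have h2 := Finset.card_biUnion_le (s := (Finset.univ : Finset (Fin n)))
      (t := fun i : Fin n => Finset.univ.filter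
        (fun σ : Equiv.Perm (Fin n × Fin t) => (xbar + M) * t ≤ ∑ j, x (σ (i, j))))
    have := h1.trans h2
    exact_mod_cast this
  calc ((Finset.univ.filter fun σ : Equiv.Perm (Fin n × Fin t) =>
      (⨆ i, streamMean n t (fun p => x (σ p)) i) ≥ ⨆ i, streamMean n t x i).card : ℝ)
      ≤ ∑ i : Fin n, ((Finset.univ.filter (fun σ : Equiv.Perm (Fin n × Fin t) =>
          (xbar + M) * t ≤ ∑ j, x (σ (i, j)))).card : ℝ) := hchain
    _ ≤ ∑ i : Fin n, Real.exp (-(lam * ((t:ℝ) * M))) *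
          ∑ σ : Equiv.Perm (Fin n × Fin t), ∏ j, b (σ (i, j)) :=
        Finset.sum_le_sum fun i _ => hcardFi i
    _ ≤ ∑ _i : Fin n, Real.exp (-(lam * ((t:ℝ) * M))) *
          (((n*t).factorial : ℝ) * Real.exp ((t:ℝ) * z)) :=
        Finset.sum_le_sum fun i _ =>
          mul_le_mul_of_nonneg_left (hperm i) (Real.exp_pos _).le
    _ = (n:ℝ) * Real.exp (-((t:ℝ) * M ^ 2) / (2 * sig2 + 2 / 3 * csup * M))
          * ((n*t).factorial : ℝ) := by
        rw [Finset.sum_const, Finset.card_univ, Fintype.card_fin, nsmul_eq_mul, ← hexp_eq]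
        ring
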